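/- arXiv:1812.06704 — 2 statements merged into one kernel-verified Lean document; each statement's English description precedes it below -/
import Mathlib

section
/- The character space (the set of nonzero continuous unital *-algebra homomorphisms to ℂ, with the weak-* topology) of the commutative C*-algebra C(X̄) of bounded continuous complex functions on X with uniform radial limits at infinity is homeomorphic to the closed unit ball of X. -/
open MeasureTheory Metric Filter Topology

noncomputable section

/-- `X d` is the Euclidean space `ℝ^d` with its standard inner product and norm. -/
abbrev X (d : ℕ) : Type := EuclideanSpace ℝ (Fin d)

/-- `h` is a boundary function for `f` : `f` has uniform radial limits at infinity given
(on the unit sphere) by the continuous function `h`. -/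
def IsBoundary {E : Type*} [NormedAddCommGroup E] [InnerProductSpace ℝ E]
    (f : E → ℂ) (h : E → ℂ) : Prop :=
  Continuous h ∧
    ∀ ε > 0, ∃ r > 0, ∀ z : E, r ≤ ‖z‖ → ‖f z - h (‖z‖⁻¹ • z)‖ < ε

/-- `f` has uniform radial limits at infinity. -/
def HasUniformRadialLimits {E : Type*} [NormedAddCommGroup E] [InnerProductSpace ℝ E]
    (f : E → ℂ) : Prop :=
  ∃ h : E → ℂ, IsBoundary f h

/-- `C(X̄)` : the closed unital *-subalgebra of `C_b(X)` of bounded continuous complex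
functions on `X` with uniform radial limits at infinity. -/
def CXbar (d : ℕ) : StarSubalgebra ℂ (BoundedContinuousFunction (X d) ℂ) :=
  (StarAlgebra.adjoin ℂ {f : BoundedContinuousFunction (X d) ℂ |
      HasUniformRadialLimits ⇑f}).topologicalClosure

/-! ### Auxiliary development -/

/-- The closed unit ball of `X d` as a type. -/
abbrev Bd (d : ℕ) : Type := Metric.closedBall (0 : X d) 1

instance (d : ℕ) : CompactSpace (Bd d) :=
  isCompact_iff_compactSpace.mp (isCompact_closedBall _ _)

variable {d : ℕ}

lemma one_add_norm_pos (x : X d) : (0:ℝ) < 1 + ‖x‖ := by positivity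

lemma norm_scale_smul (c : ℝ) (hc : 0 ≤ c) (x : X d) : ‖c • x‖ = c * ‖x‖ := by
  rw [norm_smul, Real.norm_of_nonneg hc]

lemma phi_mem (x : X d) : (1 + ‖x‖)⁻¹ • x ∈ Metric.closedBall (0 : X d) 1 := by
  have h := one_add_norm_pos x
  rw [Metric.mem_closedBall, dist_zero_right, norm_scale_smul _ (by positivity)]
  rw [inv_mul_le_iff₀ h]
  linarith [norm_nonneg x]

/-- The homeomorphism-onto-the-open-ball map `x ↦ x / (1 + ‖x‖)` into the closed ball. -/
def phi (d : ℕ) : C(X d, Bd d) :=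
  ⟨fun x => ⟨(1 + ‖x‖)⁻¹ • x, phi_mem x⟩, by
    apply Continuous.subtype_mk
    exact ((continuous_const.add continuous_norm).inv₀
      (fun x => (one_add_norm_pos x).ne')).smul continuous_id⟩

/-- Pullback along `phi`, a star algebra homomorphism `C(B̄, ℂ) → C_b(X, ℂ)`. -/
def Phi (d : ℕ) : C(Bd d, ℂ) →⋆ₐ[ℂ] BoundedContinuousFunction (X d) ℂ where
  toFun g := (BoundedContinuousFunction.mkOfCompact g).compContinuous (phi d)
  map_one' := rfl
  map_mul' _ _ := rfl
  map_zero' := rfl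
  map_add' _ _ := rfl
  commutes' _ := rfl
  map_star' _ := rfl

lemma Phi_apply (g : C(Bd d, ℂ)) (x : X d) : Phi d g x = g (phi d x) := rfl

lemma phi_psi (w : X d) (hw : ‖w‖ < 1) :
    ((phi d) ((1 - ‖w‖)⁻¹ • w) : X d) = w := by
  have h1 : (0:ℝ) < 1 - ‖w‖ := by linarith
  show (1 + ‖(1 - ‖w‖)⁻¹ • w‖)⁻¹ • ((1 - ‖w‖)⁻¹ • w) = w
  rw [norm_scale_smul _ (by positivity)]
  rw [smul_smul]
  have : (1 + (1 - ‖w‖)⁻¹ * ‖w‖)⁻¹ * (1 - ‖w‖)⁻¹ = 1 := by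
    field_simp
    ring
  rw [this, one_smul]

lemma norm_phi_lt_one (x : X d) : ‖((phi d) x : X d)‖ < 1 := by
  have h := one_add_norm_pos x
  show ‖(1 + ‖x‖)⁻¹ • x‖ < 1
  rw [norm_scale_smul _ (by positivity), inv_mul_lt_iff₀ h]
  linarith [norm_nonneg x]

lemma psi_phi (x : X d) :
    (1 - ‖((phi d) x : X d)‖)⁻¹ • ((phi d) x : X d) = x := by
  have h := one_add_norm_pos x
  show (1 - ‖(1 + ‖x‖)⁻¹ • x‖)⁻¹ • ((1 + ‖x‖)⁻¹ • x) = x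
  rw [norm_scale_smul _ (by positivity), smul_smul]
  have : (1 - (1 + ‖x‖)⁻¹ * ‖x‖)⁻¹ * (1 + ‖x‖)⁻¹ = 1 := by
    field_simp
    ring
  rw [this, one_smul]

lemma denseRange_phi : DenseRange (phi d) := by
  rw [Metric.denseRange_iff]
  rintro ⟨v, hv⟩ ε hε
  rw [Metric.mem_closedBall, dist_zero_right] at hv
  obtain ⟨c, hc0, hc1, hcε⟩ : ∃ c : ℝ, 0 ≤ c ∧ c < 1 ∧ 1 - c < ε := by
    refine ⟨max 0 (1 - ε/2), le_max_left _ _, ?_, ?_⟩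
    · apply max_lt (by linarith) (by linarith)
    · have := le_max_right 0 (1 - ε/2); linarith [le_max_right 0 (1 - ε/2)]
  have hcv : ‖c • v‖ < 1 := by
    rw [norm_scale_smul _ hc0]
    calc c * ‖v‖ ≤ c * 1 := by nlinarith
    _ < 1 := by linarith
  refine ⟨(1 - ‖c • v‖)⁻¹ • (c • v), ?_⟩
  rw [Subtype.dist_eq, phi_psi _ hcv]
  show dist v (c • v) < ε
  rw [dist_eq_norm]
  have : v - c • v = (1 - c) • v := by rw [sub_smul, one_smul]
  rw [this, norm_scale_smul _ (by linarith)]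
  nlinarith [norm_nonneg v]

lemma norm_Phi (g : C(Bd d, ℂ)) : ‖Phi d g‖ = ‖g‖ := by
  apply le_antisymm
  · calc ‖Phi d g‖ ≤ ‖BoundedContinuousFunction.mkOfCompact g‖ :=
        BoundedContinuousFunction.norm_compContinuous_le _ _
    _ = ‖g‖ := BoundedContinuousFunction.norm_mkOfCompact g
  · rw [← BoundedContinuousFunction.norm_mkOfCompact g]
    apply BoundedContinuousFunction.norm_le (norm_nonneg _) |>.mpr
    intro y
    have hclosed : IsClosed {y : Bd d | ‖g y‖ ≤ ‖Phi d g‖} :=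
      isClosed_le (by continuity) continuous_const
    have hsub : Set.range (phi d) ⊆ {y : Bd d | ‖g y‖ ≤ ‖Phi d g‖} := by
      rintro _ ⟨x, rfl⟩
      exact (Phi d g).norm_coe_le_norm x
    have hdr := denseRange_phi (d := d)
    have h2 : closure (Set.range (phi d)) ⊆ {y : Bd d | ‖g y‖ ≤ ‖Phi d g‖} :=
      hclosed.closure_subset_iff.mpr hsub
    exact h2 (hdr.closure_range ▸ Set.mem_univ y)

lemma proj_mem (u : X d) : (max 1 ‖u‖)⁻¹ • u ∈ Metric.closedBall (0 : X d) 1 := by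
  have h1 : (0:ℝ) < max 1 ‖u‖ := lt_max_of_lt_left one_pos
  rw [Metric.mem_closedBall, dist_zero_right, norm_scale_smul _ (by positivity),
    inv_mul_le_iff₀ h1]
  simpa using le_max_right 1 ‖u‖

lemma radial_Phi (g : C(Bd d, ℂ)) :
    IsBoundary (⇑(Phi d g)) (fun u => g ⟨(max 1 ‖u‖)⁻¹ • u, proj_mem u⟩) := by
  constructor
  · apply g.continuous.comp
    apply Continuous.subtype_mk
    exact ((continuous_const.max continuous_norm).inv₀
      (fun u => (lt_max_of_lt_left one_pos).ne')).smul continuous_id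
  · intro ε hε
    obtain ⟨δ, hδ, hδ2⟩ := Metric.uniformContinuous_iff.mp
      (CompactSpace.uniformContinuous_of_continuous g.continuous) ε hε
    refine ⟨δ⁻¹, by positivity, fun z hz => ?_⟩
    have hz0 : (0:ℝ) < ‖z‖ := lt_of_lt_of_le (by positivity) hz
    have hunit : ‖‖z‖⁻¹ • z‖ = 1 := by
      rw [norm_scale_smul _ (by positivity), inv_mul_cancel₀ hz0.ne']
    have key : (fun u => g ⟨(max 1 ‖u‖)⁻¹ • u, proj_mem u⟩) (‖z‖⁻¹ • z)
        = g ⟨‖z‖⁻¹ • z, by rw [Metric.mem_closedBall, dist_zero_right, hunit]⟩ := by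
      apply congrArg
      apply Subtype.ext
      show (max 1 ‖‖z‖⁻¹ • z‖)⁻¹ • (‖z‖⁻¹ • z) = ‖z‖⁻¹ • z
      rw [hunit, max_self, inv_one, one_smul]
    rw [key, Phi_apply, ← dist_eq_norm]
    apply hδ2
    rw [Subtype.dist_eq]
    show dist ((1 + ‖z‖)⁻¹ • z) (‖z‖⁻¹ • z) < δ
    rw [dist_eq_norm, ← sub_smul, norm_smul, Real.norm_eq_abs]
    have h1 : (1 + ‖z‖)⁻¹ - ‖z‖⁻¹ = -((‖z‖ * (1 + ‖z‖))⁻¹) := by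
      field_simp
      ring
    rw [h1, abs_neg, abs_of_nonneg (by positivity)]
    have h2 : (‖z‖ * (1 + ‖z‖))⁻¹ * ‖z‖ = (1 + ‖z‖)⁻¹ := by
      field_simp
    rw [h2]
    have hδz : δ⁻¹ < 1 + ‖z‖ := by linarith
    calc (1 + ‖z‖)⁻¹ < (δ⁻¹)⁻¹ := by
          apply inv_strictAnti₀ (by positivity) hδz
    _ = δ := inv_inv δ

/-- The candidate continuous extension of `f` to the closed ball (read through `phi`). -/
def Gfun (f h : X d → ℂ) : X d → ℂ :=
  fun v => if ‖v‖ < 1 then f ((1 - ‖v‖)⁻¹ • v) else h v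

lemma continuous_G {f h : X d → ℂ} (hf : Continuous f) (hb : IsBoundary f h) :
    Continuous (Gfun f h) := by
  rw [continuous_iff_continuousAt]
  intro v
  by_cases hv : ‖v‖ < 1
  · have hev : ∀ᶠ u in nhds v, ‖u‖ < 1 :=
      continuous_norm.continuousAt.eventually_lt continuousAt_const hv
    have hψ : ContinuousAt (fun u : X d => f ((1 - ‖u‖)⁻¹ • u)) v := by
      apply hf.continuousAt.comp
      exact (((continuousAt_const.sub continuous_norm.continuousAt).inv₀
        (sub_pos.mpr hv).ne').smul continuousAt_id)
    apply hψ.congr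
    filter_upwards [hev] with u hu
    simp [Gfun, hu]
  · push_neg at hv
    rw [Metric.continuousAt_iff]
    intro ε hε
    have hGv : Gfun f h v = h v := if_neg (not_lt.mpr hv)
    obtain ⟨r, hr, hrad⟩ := hb.2 (ε/2) (by linarith)
    obtain ⟨δ₁, hδ₁, hh⟩ := Metric.continuousAt_iff.mp
      (hb.1.continuousAt : ContinuousAt h v) (ε/2) (by linarith)
    refine ⟨min (δ₁/2) (min (r+1)⁻¹ 2⁻¹), by positivity, fun u hu => ?_⟩
    rw [hGv]
    have hd1 : dist u v < δ₁/2 := lt_of_lt_of_le hu (min_le_left _ _)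
    have hd2 : dist u v < (r+1)⁻¹ := lt_of_lt_of_le hu ((min_le_right _ _).trans (min_le_left _ _))
    have hd3 : dist u v < 2⁻¹ := lt_of_lt_of_le hu ((min_le_right _ _).trans (min_le_right _ _))
    by_cases hu1 : ‖u‖ < 1
    · have hGu : Gfun f h u = f ((1 - ‖u‖)⁻¹ • u) := if_pos hu1
      have hsub : 1 - ‖u‖ ≤ dist u v := by
        have := norm_sub_norm_le v u
        rw [dist_eq_norm, ← norm_neg (u - v), neg_sub]
        linarith
      have hu0 : (0:ℝ) < ‖u‖ := by linarith
      have huc : (0:ℝ) < 1 - ‖u‖ := by linarith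
      set z := (1 - ‖u‖)⁻¹ • u with hz
      have hnz : ‖z‖ = (1 - ‖u‖)⁻¹ * ‖u‖ := norm_scale_smul _ (by positivity) u
      have hzr : r ≤ ‖z‖ := by
        rw [hnz, le_inv_mul_iff₀ huc]
        have h9 : (1 - ‖u‖) * (r + 1) < (r+1)⁻¹ * (r+1) :=
          mul_lt_mul_of_pos_right (by linarith) (by linarith)
        rw [inv_mul_cancel₀ (by linarith : r + 1 ≠ 0)] at h9
        nlinarith
      have hunitz : ‖z‖⁻¹ • z = ‖u‖⁻¹ • u := by
        rw [hz, hnz, smul_smul]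
        congr 1
        field_simp
      have bound1 : ‖f z - h (‖u‖⁻¹ • u)‖ < ε/2 := by
        rw [← hunitz]; exact hrad z hzr
      have bound2 : dist (h (‖u‖⁻¹ • u)) (h v) < ε/2 := by
        apply hh
        have e1 : ‖‖u‖⁻¹ • u - u‖ = 1 - ‖u‖ := by
          have : ‖u‖⁻¹ • u - u = (‖u‖⁻¹ - 1) • u := by rw [sub_smul, one_smul]
          rw [this, norm_scale_smul _ (by rw [sub_nonneg, one_le_inv_iff₀]; exact ⟨hu0, hu1.le⟩)]
          field_simp
        calc dist (‖u‖⁻¹ • u) v ≤ dist (‖u‖⁻¹ • u) u + dist u v := dist_triangle _ _ _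
        _ = (1 - ‖u‖) + dist u v := by rw [dist_eq_norm, e1]
        _ ≤ 2 * dist u v := by linarith
        _ < δ₁ := by linarith
      rw [hGu]
      calc dist (f z) (h v) ≤ dist (f z) (h (‖u‖⁻¹ • u)) + dist (h (‖u‖⁻¹ • u)) (h v) :=
            dist_triangle _ _ _
      _ < ε/2 + ε/2 := add_lt_add (by rw [dist_eq_norm]; exact bound1) bound2
      _ = ε := by ring
    · rw [Gfun, if_neg hu1]
      exact lt_of_lt_of_le (hh (by linarith)) (by linarith)

lemma mem_range_of_radial (f : BoundedContinuousFunction (X d) ℂ)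
    (hf : HasUniformRadialLimits ⇑f) : f ∈ (Phi d).range := by
  obtain ⟨h, hb⟩ := hf
  refine ⟨⟨fun y => Gfun ⇑f h (y : X d),
    (continuous_G f.continuous hb).comp continuous_subtype_val⟩, ?_⟩
  ext x
  show Gfun ⇑f h ((phi d x : X d)) = f x
  rw [Gfun, if_pos (norm_phi_lt_one x), psi_phi]

lemma CXbar_eq_range (d : ℕ) : CXbar d = (Phi d).range := by
  apply le_antisymm
  · apply StarSubalgebra.topologicalClosure_minimal
    · apply StarAlgebra.adjoin_le
      intro f hf
      exact mem_range_of_radial f hf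
    · have iso : Isometry (Phi d) :=
        AddMonoidHomClass.isometry_of_norm _ (fun g => norm_Phi g)
      exact iso.isClosedEmbedding.isClosed_range
  · rintro f ⟨g, rfl⟩
    apply StarSubalgebra.le_topologicalClosure
    apply StarAlgebra.subset_adjoin
    exact ⟨_, radial_Phi g⟩

open WeakDual in
/-- The character space homeomorphism induced by a `StarAlgEquiv`. -/
def charHomeo {A B : Type*} [NormedRing A] [NormedAlgebra ℂ A] [CompleteSpace A] [StarRing A]
    [NormedRing B] [NormedAlgebra ℂ B] [CompleteSpace B] [StarRing B] (e : A ≃⋆ₐ[ℂ] B) :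
    characterSpace ℂ B ≃ₜ characterSpace ℂ A where
  toFun := CharacterSpace.compContinuousMap (StarAlgHomClass.toStarAlgHom e)
  invFun := CharacterSpace.compContinuousMap (StarAlgHomClass.toStarAlgHom e.symm)
  left_inv χ := by
    apply Subtype.ext
    apply ContinuousLinearMap.ext
    intro b
    show χ (e (e.symm b)) = χ b
    rw [e.apply_symm_apply]
  right_inv χ := by
    apply Subtype.ext
    apply ContinuousLinearMap.ext
    intro a
    show χ (e.symm (e a)) = χ a
    rw [e.symm_apply_apply]
  continuous_toFun := (CharacterSpace.compContinuousMap _).continuous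
  continuous_invFun := (CharacterSpace.compContinuousMap _).continuous

/-- The character space (with the weak-* topology) of the commutative C*-algebra `C(X̄)` of
bounded continuous complex functions on `X` with uniform radial limits at infinity is
homeomorphic to the closed unit ball of `X`. -/
theorem characterSpace_CXbar_homeomorph_closedBall (d : ℕ) (hd : 1 ≤ d) :
    Nonempty ((WeakDual.characterSpace ℂ ↥(CXbar d)) ≃ₜ (Metric.closedBall (0 : X d) 1)) := by
  rw [CXbar_eq_range d]
  have iso : Isometry (Phi d) :=
    AddMonoidHomClass.isometry_of_norm _ (fun g => norm_Phi g)
  haveI : CompleteSpace ↥((Phi d).range) := by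
    have hcl : IsClosed ((Phi d).range : Set (BoundedContinuousFunction (X d) ℂ)) :=
      iso.isClosedEmbedding.isClosed_range
    exact hcl.completeSpace_coe
  have e : C(Bd d, ℂ) ≃⋆ₐ[ℂ] ↥((Phi d).range) :=
    StarAlgEquiv.ofInjective (Phi d) iso.injective
  exact ⟨(charHomeo e).trans (WeakDual.CharacterSpace.homeoEval (Bd d) ℂ).symm⟩
end
end

section
/- Let f be a bounded continuous complex function on X with uniform radial limits at infinity. Then for every R > 0 and every ε > 0 there exists M > 0 such that |f(x) − f(y)| < ε whenever ‖x‖ ≥ M and ‖x − y‖ ≤ R. In other words, f(x) − f(y) tends to 0 as ‖x‖ → ∞ uniformly over pairs (x,y) with ‖x − y‖ bounded. -/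
open MeasureTheory Metric Filter Topology

noncomputable section

/-- The generating set of the algebra `E_S(X)` : functions of the form `g ∘ π_Y` with `Y ∈ S`
and `g` a bounded continuous function on `Y^⊥` having uniform radial limits at infinity. -/
def projGen {E : Type*} [NormedAddCommGroup E] [InnerProductSpace ℝ E]
    [FiniteDimensional ℝ E] (S : Set (Submodule ℝ E)) :
    Set (BoundedContinuousFunction E ℂ) :=
  { f | ∃ Y ∈ S, ∃ g : BoundedContinuousFunction (↥Yᗮ) ℂ,
      HasUniformRadialLimits ⇑g ∧ ∀ x : E, f x = g (Submodule.orthogonalProjection Yᗮ x) }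

/-- `E_S(X)` : the smallest closed unital *-subalgebra of `C_b(X)` containing all `g ∘ π_Y`
with `Y ∈ S` and `g` having uniform radial limits at infinity. -/
def ES {E : Type*} [NormedAddCommGroup E] [InnerProductSpace ℝ E]
    [FiniteDimensional ℝ E] (S : Set (Submodule ℝ E)) :
    StarSubalgebra ℂ (BoundedContinuousFunction E ℂ) :=
  (StarAlgebra.adjoin ℂ (projGen S)).topologicalClosure

/-- If `f` is bounded continuous with uniform radial limits at infinity, then
`f(x) − f(y) → 0` as `‖x‖ → ∞`, uniformly over pairs `(x, y)` with `‖x − y‖` bounded. -/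
theorem oscillation_small_at_infinity (d : ℕ) (hd : 1 ≤ d)
    (f : BoundedContinuousFunction (X d) ℂ) (hf : HasUniformRadialLimits ⇑f) :
    ∀ R > (0 : ℝ), ∀ ε > (0 : ℝ), ∃ M > (0 : ℝ), ∀ x y : X d,
      M ≤ ‖x‖ → ‖x - y‖ ≤ R → ‖f x - f y‖ < ε := by
  obtain ⟨h, hcont, hlim⟩ := hf
  intro R hR ε hε
  obtain ⟨r, hr, hfr⟩ := hlim (ε / 3) (by positivity)
  have hcomp : IsCompact (Metric.closedBall (0 : X d) 1) := isCompact_closedBall 0 1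
  have huc := hcomp.uniformContinuousOn_of_continuous hcont.continuousOn
  rw [Metric.uniformContinuousOn_iff] at huc
  obtain ⟨δ, hδ, hδ'⟩ := huc (ε / 3) (by positivity)
  refine ⟨max (r + R + 1) (2 * R / δ + 1), lt_max_of_lt_left (by positivity), ?_⟩
  intro x y hMx hxy
  have hx1 : r + R + 1 ≤ ‖x‖ := le_trans (le_max_left _ _) hMx
  have hx2 : 2 * R / δ + 1 ≤ ‖x‖ := le_trans (le_max_right _ _) hMx
  have hxpos : (0 : ℝ) < ‖x‖ := by linarith [hR, hr]
  have hy1 : r + 1 ≤ ‖y‖ := by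
    have := abs_norm_sub_norm_le x y
    have := abs_le.mp this
    linarith [this.1]
  have hypos : (0 : ℝ) < ‖y‖ := by linarith
  have hx0 : x ≠ 0 := fun h0 => by simp [h0] at hxpos
  have hy0 : y ≠ 0 := fun h0 => by simp [h0] at hypos
  have hux : ‖(‖x‖⁻¹ • x : X d)‖ = 1 := by
    rw [norm_smul, norm_inv, norm_norm, inv_mul_cancel₀ hxpos.ne']
  have huy : ‖(‖y‖⁻¹ • y : X d)‖ = 1 := by
    rw [norm_smul, norm_inv, norm_norm, inv_mul_cancel₀ hypos.ne']
  -- key estimate on unit vectors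
  have key : ‖(‖x‖⁻¹ • x : X d) - ‖y‖⁻¹ • y‖ ≤ 2 * ‖x - y‖ / ‖x‖ := by
    have hdecomp : (‖x‖⁻¹ • x : X d) - ‖y‖⁻¹ • y
        = ‖x‖⁻¹ • (x - y) + (‖x‖⁻¹ - ‖y‖⁻¹) • y := by
      rw [smul_sub, sub_smul]; abel
    rw [hdecomp]
    have h1 : ‖(‖x‖⁻¹ • (x - y) : X d)‖ = ‖x - y‖ / ‖x‖ := by
      rw [norm_smul, norm_inv, norm_norm]; ring
    have h2 : ‖((‖x‖⁻¹ - ‖y‖⁻¹) • y : X d)‖ ≤ ‖x - y‖ / ‖x‖ := by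
      rw [norm_smul, Real.norm_eq_abs]
      have heq : ‖x‖⁻¹ - ‖y‖⁻¹ = (‖y‖ - ‖x‖) / (‖x‖ * ‖y‖) := by
        field_simp
      rw [heq, abs_div, abs_of_pos (by positivity : (0:ℝ) < ‖x‖ * ‖y‖)]
      have hab : |‖y‖ - ‖x‖| ≤ ‖x - y‖ := by
        have := abs_norm_sub_norm_le y x
        rwa [show y - x = -(x - y) by abel, norm_neg] at this
      calc |‖y‖ - ‖x‖| / (‖x‖ * ‖y‖) * ‖y‖ = |‖y‖ - ‖x‖| / ‖x‖ := by
            field_simp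
        _ ≤ ‖x - y‖ / ‖x‖ := by gcongr
    calc ‖(‖x‖⁻¹ • (x - y) : X d) + (‖x‖⁻¹ - ‖y‖⁻¹) • y‖
        ≤ ‖(‖x‖⁻¹ • (x - y) : X d)‖ + ‖((‖x‖⁻¹ - ‖y‖⁻¹) • y : X d)‖ := norm_add_le _ _
      _ ≤ ‖x - y‖ / ‖x‖ + ‖x - y‖ / ‖x‖ := by rw [h1]; linarith
      _ = 2 * ‖x - y‖ / ‖x‖ := by ring
  have hsmall : ‖(‖x‖⁻¹ • x : X d) - ‖y‖⁻¹ • y‖ < δ := by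
    have h2R : 2 * ‖x - y‖ / ‖x‖ < δ := by
      rw [div_lt_iff₀ hxpos]
      have : 2 * R / δ * δ = 2 * R := by field_simp
      nlinarith [mul_le_mul_of_nonneg_left hxy (by norm_num : (0:ℝ) ≤ 2)]
    linarith [key]
  have hhx := hfr x (by linarith)
  have hhy := hfr y (by linarith)
  have hmid : ‖h (‖x‖⁻¹ • x) - h (‖y‖⁻¹ • y)‖ < ε / 3 := by
    have hxmem : (‖x‖⁻¹ • x : X d) ∈ Metric.closedBall (0 : X d) 1 := by
      simp [Metric.mem_closedBall, dist_zero_right, hux]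
    have hymem : (‖y‖⁻¹ • y : X d) ∈ Metric.closedBall (0 : X d) 1 := by
      simp [Metric.mem_closedBall, dist_zero_right, huy]
    have := hδ' _ hxmem _ hymem (by rwa [dist_eq_norm])
    rwa [dist_eq_norm] at this
  calc ‖f x - f y‖
      = ‖(f x - h (‖x‖⁻¹ • x)) + (h (‖x‖⁻¹ • x) - h (‖y‖⁻¹ • y))
          + (h (‖y‖⁻¹ • y) - f y)‖ := by ring_nf
    _ ≤ ‖f x - h (‖x‖⁻¹ • x)‖ + ‖h (‖x‖⁻¹ • x) - h (‖y‖⁻¹ • y)‖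
          + ‖h (‖y‖⁻¹ • y) - f y‖ := norm_add₃_le
    _ < ε / 3 + ε / 3 + ε / 3 := by
        have : ‖h (‖y‖⁻¹ • y) - f y‖ = ‖f y - h (‖y‖⁻¹ • y)‖ := norm_sub_rev _ _
        rw [this]
        exact add_lt_add (add_lt_add hhx hmid) hhy
    _ = ε := by ring
end
end
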